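/- arXiv:math/0310121 — 2 statements merged into one kernel-verified Lean document; each statement's English description precedes it below -/
import Mathlib

section
/- Let (W,S) be a Coxeter system with Bruhat order, s ∈ S, u ≤ w with u < us, w < ws, and us ≰ w. Then the Bruhat interval [u,ws] is order-isomorphic to the product poset [u,w] × [1,s], where [1,s] is a two-element chain. -/
/-- Bruhat order on a Coxeter group, defined via the subword property:
`u ≤ v` iff some reduced word for `v` contains a reduced word for `u` as a subword. -/
def bruhatLE {B W : Type*} [Group W] {M : CoxeterMatrix B}
    (cs : CoxeterSystem M W) (u v : W) : Prop :=
  ∃ lv lu : List B, cs.IsReduced lv ∧ cs.wordProd lv = v ∧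
    cs.IsReduced lu ∧ cs.wordProd lu = u ∧ lu.Sublist lv

/-- Strict Bruhat order. -/
def bruhatLT {B W : Type*} [Group W] {M : CoxeterMatrix B}
    (cs : CoxeterSystem M W) (u v : W) : Prop :=
  bruhatLE cs u v ∧ u ≠ v


open List

theorem sublist_concat_cases' {α : Type*} {τ ω : List α} {b : α} (h : τ <+ ω ++ [b]) :
    τ <+ ω ∨ ∃ τ₀, τ = τ₀ ++ [b] ∧ τ₀ <+ ω := by
  rw [← List.reverse_sublist] at h
  simp only [List.reverse_append, List.reverse_singleton, List.singleton_append] at h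
  rcases List.sublist_cons_iff.mp h with h' | ⟨τ₀, hτ, h'⟩
  · left
    rw [← List.reverse_sublist, List.reverse_reverse] at h'
    simpa using h'
  · right
    refine ⟨τ₀.reverse, ?_, ?_⟩
    · have := congrArg List.reverse hτ
      simpa using this
    · rw [← List.reverse_sublist, List.reverse_reverse] at h'
      simpa using h'


namespace BruhatAux

open CoxeterSystem

variable {B W : Type*} [Group W] {M : CoxeterMatrix B} (cs : CoxeterSystem M W)

local prefix:100 "π" => cs.wordProd
local prefix:100 "ℓ" => cs.length
local prefix:100 "σ" => cs.simple

theorem ris_cons (i : B) (ω : List B) :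
    cs.rightInvSeq (i :: ω) = ((π ω)⁻¹ * σ i * π ω) :: cs.rightInvSeq ω := rfl

theorem ris_append (ω ω' : List B) :
    cs.rightInvSeq (ω ++ ω') =
      (cs.rightInvSeq ω).map (fun x => (π ω')⁻¹ * x * π ω') ++ cs.rightInvSeq ω' := by
  induction ω with
  | nil => simp
  | cons i ω ih =>
      rw [cons_append, ris_cons, ris_cons, ih, map_cons, cons_append]
      congr 1
      rw [cs.wordProd_append]
      group

theorem ris_eq_map_lis (ω : List B) :
    cs.rightInvSeq ω = (cs.leftInvSeq ω).map (fun x => (π ω)⁻¹ * x * π ω) := by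
  induction ω with
  | nil => simp
  | cons i ω ih =>
      rw [ris_cons, leftInvSeq, map_cons, ih, map_map]
      congr 1
      · simp [cs.wordProd_cons, mul_inv_rev, cs.inv_simple, mul_assoc,
          cs.simple_mul_simple_cancel_left]
      · apply List.map_congr_left
        intro x _
        simp only [Function.comp_apply, MulAut.conj_apply, cs.wordProd_cons, mul_inv_rev]
        group

end BruhatAux

namespace BruhatAux

open CoxeterSystem

variable {B W : Type*} [Group W] {M : CoxeterMatrix B} (cs : CoxeterSystem M W)

local prefix:100 "π" => cs.wordProd
local prefix:100 "ℓ" => cs.length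
local prefix:100 "σ" => cs.simple

section Parity

variable [DecidableEq W]

/-- The permutation of `W × ZMod 2` associated to a simple generator. -/
def sigmaFun (i : B) : W × ZMod 2 → W × ZMod 2 :=
  fun x => (σ i * x.1 * σ i, x.2 + if x.1 = σ i then 1 else 0)

theorem sigmaFun_involutive (i : B) : Function.Involutive (sigmaFun cs i) := by
  rintro ⟨t, e⟩
  simp only [sigmaFun]
  have h1 : σ i * (σ i * t * σ i) * σ i = t := by
    simp [mul_assoc, cs.simple_mul_simple_cancel_left, cs.simple_mul_simple_cancel_right]
  have h2 : (σ i * t * σ i = σ i) ↔ (t = σ i) := by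
    constructor
    · intro h
      have := congrArg (fun y => σ i * y * σ i) h
      simpa [mul_assoc, cs.simple_mul_simple_cancel_left,
        cs.simple_mul_simple_cancel_right, cs.simple_mul_simple_self] using this
    · rintro rfl
      simp [mul_assoc, cs.simple_mul_simple_cancel_left]
  refine Prod.ext h1 ?_
  by_cases ht : t = σ i
  · have h12 : (1 : ZMod 2) + 1 = 0 := rfl
    simp [ht, h2, mul_assoc, cs.simple_mul_simple_cancel_left, add_assoc, h12]
  · simp [ht, h2]

/-- The permutation of `W × ZMod 2` associated to a simple generator. -/
def sigmaPerm (i : B) : Equiv.Perm (W × ZMod 2) :=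
  (sigmaFun_involutive cs i).toPerm

theorem prod_sigmaPerm_apply (ω : List B) (t : W) (e : ZMod 2) :
    ((ω.map (sigmaPerm cs)).prod) (t, e) =
      (π ω * t * (π ω)⁻¹, e + ((cs.rightInvSeq ω).count t : ZMod 2)) := by
  induction ω generalizing e with
  | nil => simp
  | cons i ω ih =>
      rw [map_cons, prod_cons, Equiv.Perm.mul_apply, ih]
      show sigmaFun cs i _ = _
      rw [sigmaFun]
      have hcond : (π ω * t * (π ω)⁻¹ = σ i) ↔ (t = (π ω)⁻¹ * σ i * π ω) := by
        constructor
        · intro h; rw [← h]; group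
        · intro h; rw [h]; group
      refine Prod.ext ?_ ?_
      · show σ i * (π ω * t * (π ω)⁻¹) * σ i = π (i :: ω) * t * (π (i :: ω))⁻¹
        rw [cs.wordProd_cons, mul_inv_rev, cs.inv_simple]
        group
      · show e + _ + _ = e + _
        rw [ris_cons, List.count_cons]
        by_cases ht : t = (π ω)⁻¹ * σ i * π ω
        · rw [if_pos (hcond.mpr ht), if_pos (by rw [beq_iff_eq]; exact ht.symm)]
          push_cast
          ring
        · rw [if_neg (fun h => ht (hcond.mp h)),
            if_neg (fun h => ht (by rw [beq_iff_eq] at h; exact h.symm))]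
          push_cast
          ring

end Parity



theorem drop_alternatingWord (i i' : B) (n k : ℕ) (h : k ≤ n) :
    (alternatingWord i i' n).drop k = alternatingWord i i' (n - k) := by
  induction n generalizing k with
  | zero => interval_cases k <;> simp [alternatingWord]
  | succ n ih =>
      rcases Nat.eq_zero_or_pos k with rfl | hk
      · simp
      · obtain ⟨k, rfl⟩ := Nat.exists_eq_succ_of_ne_zero (Nat.pos_iff_ne_zero.mp hk)
        rw [alternatingWord_succ' i i' n, List.drop_succ_cons, ih k (by omega)]
        congr 1
        omega

theorem getD_ris_alternatingWord (i i' : B) (n j : ℕ) (hj : j < n) :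
    (cs.rightInvSeq (alternatingWord i i' n)).getD j 1 =
      (π (alternatingWord i i' (n - j - 1)))⁻¹ * π (alternatingWord i i' (n - j)) := by
  rw [cs.getD_rightInvSeq, drop_alternatingWord i i' n (j+1) (by omega)]
  have hd : alternatingWord i i' (n - j) =
      (if Even (n - j - 1) then i' else i) :: alternatingWord i i' (n - j - 1) := by
    have h1 : n - j = (n - j - 1) + 1 := by omega
    rw [h1, alternatingWord_succ']
    norm_num
  have hget : (alternatingWord i i' n)[j]? = some (if Even (n - j - 1) then i' else i) := by
    have hlen : j < (alternatingWord i i' n).length := by simp [hj]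
    rw [List.getElem?_eq_getElem hlen]
    congr 1
    have hne : (alternatingWord i i' n).drop j ≠ [] := by
      rw [drop_alternatingWord i i' n j (by omega)]
      have h1 : n - j = (n - j - 1) + 1 := by omega
      rw [h1, alternatingWord_succ']
      simp
    have := List.head_drop hne
    rw [← this]
    have h2 : (alternatingWord i i' n).drop j = alternatingWord i i' (n - j) :=
      drop_alternatingWord i i' n j (by omega)
    rw [hd] at h2
    simp [h2]
  rw [hget]
  have hπ : π (alternatingWord i i' (n - j)) =
      σ (if Even (n - j - 1) then i' else i) * π (alternatingWord i i' (n - j - 1)) := by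
    rw [hd, cs.wordProd_cons]
  rw [hπ]
  have : n - (j + 1) = n - j - 1 := by omega
  rw [this]
  simp [mul_assoc]


section AltComp

variable (i i' : B)

private theorem com (k : ℕ) :
    σ i' * (σ i * σ i') ^ k = ((σ i * σ i') ^ k)⁻¹ * σ i' := by
  induction k with
  | zero => simp
  | succ k ih =>
      have key : σ i' * (σ i * σ i') = (σ i * σ i')⁻¹ * σ i' := by
        rw [mul_inv_rev, cs.inv_simple, cs.inv_simple]
        simp [mul_assoc, cs.simple_mul_simple_cancel_left]
      rw [pow_succ, ← mul_assoc, ih, mul_assoc, key, ← mul_assoc, ← mul_inv_rev,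
        ← pow_succ', ← pow_succ]

private theorem P_even (k : ℕ) :
    π (alternatingWord i i' (2 * k)) = (σ i * σ i') ^ k := by
  rw [cs.prod_alternatingWord_eq_mul_pow]
  have : Even (2 * k) := even_two_mul k
  rw [if_pos this]
  simp [Nat.mul_div_cancel_left]

private theorem P_odd (k : ℕ) :
    π (alternatingWord i i' (2 * k + 1)) = σ i' * (σ i * σ i') ^ k := by
  rw [cs.prod_alternatingWord_eq_mul_pow]
  have h1 : ¬ Even (2 * k + 1) := by simp [parity_simps]
  rw [if_neg h1]
  congr 1
  congr 1
  omega

private theorem E1 (c : ℕ) :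
    ((σ i * σ i') ^ c)⁻¹ * (σ i' * (σ i * σ i') ^ c) =
      ((σ i * σ i') ^ (2 * c))⁻¹ * σ i' := by
  rw [com cs i i' c, ← mul_assoc, ← mul_inv_rev, ← pow_add]
  have : c + c = 2 * c := by omega
  rw [this]

private theorem E2 (c : ℕ) :
    (σ i' * (σ i * σ i') ^ c)⁻¹ * (σ i * σ i') ^ (c + 1) =
      ((σ i * σ i') ^ (2 * c + 1))⁻¹ * σ i' := by
  rw [mul_inv_rev, cs.inv_simple, mul_assoc, com cs i i' (c+1), ← mul_assoc, ← mul_inv_rev,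
    ← pow_add]
  have : c + 1 + c = 2 * c + 1 := by omega
  rw [this]

private theorem pow_add_order (e : ℕ) :
    (σ i * σ i') ^ (e + M i i') = (σ i * σ i') ^ e := by
  rw [pow_add, cs.simple_mul_simple_pow, mul_one]

/-- The key periodicity identity for inversion sequences of alternating words. -/
private theorem TT (q : ℕ) :
    (π (alternatingWord i i' (q + M i i')))⁻¹ * π (alternatingWord i i' (q + M i i' + 1)) =
      (π (alternatingWord i i' q))⁻¹ * π (alternatingWord i i' (q + 1)) := by
  set m := M i i' with hm
  rcases Nat.even_or_odd q with ⟨a, ha⟩ | ⟨a, ha⟩ <;>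
    rcases Nat.even_or_odd m with ⟨b, hb⟩ | ⟨b, hb⟩
  · rw [show q + m = 2 * (a + b) by omega, show 2 * (a+b) + 1 = 2 * (a+b) + 1 from rfl,
      show q = 2 * a by omega, show 2 * a + 1 = 2 * a + 1 from rfl]
    simp only [P_even, P_odd]
    rw [E1, E1]
    congr 2
    rw [show 2 * (a + b) = 2 * a + m by omega, pow_add_order]
  · rw [show q + m = 2 * (a + b) + 1 by omega, show 2 * (a+b) + 1 + 1 = 2 * (a+b+1) by omega,
      show q = 2 * a by omega]
    simp only [P_even, P_odd]
    rw [show a + b + 1 = (a + b) + 1 from rfl, E2, E1]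
    congr 2
    rw [show 2 * (a + b) + 1 = 2 * a + m by omega, pow_add_order]
  · rw [show q + m = 2 * (a + b) + 1 by omega, show 2 * (a+b) + 1 + 1 = 2 * (a+b+1) by omega,
      show q = 2 * a + 1 by omega, show 2 * a + 1 + 1 = 2 * (a + 1) by omega]
    simp only [P_even, P_odd]
    rw [show a + b + 1 = (a + b) + 1 from rfl, E2, E2]
    congr 2
    rw [show 2 * (a + b) + 1 = (2 * a + 1) + m by omega, pow_add_order]
  · rw [show q + m = 2 * (a + b + 1) by omega, show 2 * (a+b+1) + 1 = 2 * (a+b+1) + 1 from rfl,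
      show q = 2 * a + 1 by omega, show 2 * a + 1 + 1 = 2 * (a + 1) by omega]
    simp only [P_even, P_odd]
    rw [E1, E2]
    congr 2
    rw [show 2 * (a + b + 1) = (2 * a + 1) + m by omega, pow_add_order]

end AltComp


theorem ris_alternatingWord_doubled (i i' : B) :
    cs.rightInvSeq (alternatingWord i i' (2 * M i i')) =
      (cs.rightInvSeq (alternatingWord i i' (2 * M i i'))).take (M i i') ++
      (cs.rightInvSeq (alternatingWord i i' (2 * M i i'))).take (M i i') := by
  set m := M i i' with hm
  set l := cs.rightInvSeq (alternatingWord i i' (2 * m)) with hl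
  have hlen : l.length = 2 * m := by
    rw [hl, cs.length_rightInvSeq, length_alternatingWord]
  have hdt : l.drop m = l.take m := by
    apply List.ext_getElem
    · simp [hlen]; omega
    · intro j hj1 hj2
      have hjm : j < m := by simp [hlen] at hj1; omega
      rw [List.getElem_drop, List.getElem_take]
      have e1 : l[m + j] = l.getD (m + j) 1 := (List.getD_eq_getElem l 1 (by omega)).symm
      have e2 : l[j] = l.getD j 1 := (List.getD_eq_getElem l 1 (by omega)).symm
      rw [e1, e2, hl, getD_ris_alternatingWord cs i i' (2*m) (m+j) (by omega),
        getD_ris_alternatingWord cs i i' (2*m) j (by omega)]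
      have q1 : 2 * m - (m + j) - 1 = m - j - 1 := by omega
      have q2 : 2 * m - (m + j) = (m - j - 1) + 1 := by omega
      have q3 : 2 * m - j - 1 = (m - j - 1) + m := by omega
      have q4 : 2 * m - j = (m - j - 1) + m + 1 := by omega
      rw [q1, q2, q3, q4, TT]
  conv_lhs => rw [← List.take_append_drop m l, hdt]

section Theta

variable [DecidableEq W]

theorem pow_sigmaPerm (i i' : B) (k : ℕ) :
    (sigmaPerm cs i * sigmaPerm cs i') ^ k =
      ((alternatingWord i i' (2 * k)).map (sigmaPerm cs)).prod := by
  induction k with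
  | zero => simp [alternatingWord]
  | succ k ih =>
      have h1 : alternatingWord i i' (2 * (k + 1)) =
          i :: i' :: alternatingWord i i' (2 * k) := by
        rw [show 2 * (k + 1) = (2 * k + 1) + 1 by omega, alternatingWord_succ',
          alternatingWord_succ']
        rw [if_neg (by simp [parity_simps]), if_pos (by simp [parity_simps])]
      rw [h1, map_cons, map_cons, prod_cons, prod_cons, ← ih, pow_succ', mul_assoc]

theorem sigma_liftable : M.IsLiftable (sigmaPerm cs) := by
  intro i i'
  rw [pow_sigmaPerm]
  apply Equiv.ext
  rintro ⟨t, e⟩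
  rw [prod_sigmaPerm_apply]
  have h1 : π (alternatingWord i i' (2 * M i i')) = 1 := by
    rw [P_even, cs.simple_mul_simple_pow]
  have h2 : ((cs.rightInvSeq (alternatingWord i i' (2 * M i i'))).count t : ZMod 2) = 0 := by
    rw [ris_alternatingWord_doubled, List.count_append]
    push_cast
    rw [← two_mul, show (2 : ZMod 2) = 0 from rfl, zero_mul]
  rw [h1, h2]
  simp

/-- The parity representation of the Coxeter group. -/
noncomputable def theta : W →* Equiv.Perm (W × ZMod 2) :=
  cs.lift ⟨sigmaPerm cs, sigma_liftable cs⟩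

theorem theta_wordProd (ω : List B) :
    theta cs (π ω) = (ω.map (sigmaPerm cs)).prod := by
  unfold CoxeterSystem.wordProd
  rw [map_list_prod, List.map_map]
  congr 1
  apply List.map_congr_left
  intro j _
  exact cs.lift_apply_simple (sigma_liftable cs) j

theorem count_ris_parity_invariant {ω ω' : List B} (h : π ω = π ω') (t : W) :
    ((cs.rightInvSeq ω).count t : ZMod 2) = ((cs.rightInvSeq ω').count t : ZMod 2) := by
  have h0 : theta cs (π ω) = theta cs (π ω') := by rw [h]
  rw [theta_wordProd, theta_wordProd] at h0
  have h1 := prod_sigmaPerm_apply cs ω t 0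
  have h2 := prod_sigmaPerm_apply cs ω' t 0
  rw [h0] at h1
  rw [h2] at h1
  have := congrArg Prod.snd h1
  simpa using this.symm

/-- The parity of the number of times `t` occurs in the right inversion sequence of
any word for `w`. -/
noncomputable def nb (w t : W) : ZMod 2 :=
  ((cs.rightInvSeq (Classical.choose (cs.exists_reduced_word' w))).count t : ZMod 2)

theorem nb_eq {w : W} {ω : List B} (hω : π ω = w) (t : W) :
    nb cs w t = ((cs.rightInvSeq ω).count t : ZMod 2) := by
  have hspec := Classical.choose_spec (cs.exists_reduced_word' w)
  exact count_ris_parity_invariant cs (hspec.2.symm.trans hω.symm) t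

theorem nb_mul_reflection (w : W) {t : W} (ht : cs.IsReflection t) :
    nb cs (w * t) t = nb cs w t + 1 := by
  obtain ⟨v, j, htv⟩ := ht
  obtain ⟨α, hα⟩ := cs.wordProd_surjective v
  obtain ⟨ωw, hωw⟩ := cs.wordProd_surjective w
  set γ : List B := α ++ (j :: α.reverse) with hγ
  have hπγ : π γ = t := by
    rw [hγ, cs.wordProd_append, cs.wordProd_cons, cs.wordProd_reverse, hα, htv]
    group
  have hπjr : π (j :: α.reverse) = σ j * v⁻¹ := by
    rw [cs.wordProd_cons, cs.wordProd_reverse, hα]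
  have hfull : π (ωw ++ γ) = w * t := by rw [cs.wordProd_append, hωw, hπγ]
  rw [nb_eq cs hfull t, nb_eq cs hωw t]
  rw [ris_append, List.count_append, hπγ]
  have c1 : ((cs.rightInvSeq ωw).map (fun x => t⁻¹ * x * t)).count t
      = (cs.rightInvSeq ωw).count t := by
    have hinj : Function.Injective (fun x : W => t⁻¹ * x * t) := by
      intro a b hab
      simp only at hab
      exact mul_left_cancel (mul_right_cancel hab)
    have h := List.count_map_of_injective (cs.rightInvSeq ωw) (fun x : W => t⁻¹ * x * t) hinj t
    simpa using h
  rw [c1]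
  have c2 : (cs.rightInvSeq γ).count t = 2 * ((cs.leftInvSeq α).count t) + 1 := by
    rw [hγ, ris_append, List.count_append, hπjr]
    have hinj1 : Function.Injective (fun x : W => (σ j * v⁻¹)⁻¹ * x * (σ j * v⁻¹)) := by
      intro a b hab
      simp only at hab
      exact mul_left_cancel (mul_right_cancel hab)
    have e1 : (σ j * v⁻¹)⁻¹ * σ j * (σ j * v⁻¹) = t := by
      rw [htv, mul_inv_rev, inv_inv, cs.inv_simple]
      simp [mul_assoc, cs.simple_mul_simple_cancel_left]
    have h1 := List.count_map_of_injective (cs.rightInvSeq α)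
      (fun x : W => (σ j * v⁻¹)⁻¹ * x * (σ j * v⁻¹)) hinj1 (σ j)
    rw [e1] at h1
    rw [h1]
    have hcons : cs.rightInvSeq (j :: α.reverse) =
        ((π α.reverse)⁻¹ * σ j * π α.reverse) :: cs.rightInvSeq α.reverse := rfl
    have hhead : (π α.reverse)⁻¹ * σ j * π α.reverse = t := by
      rw [cs.wordProd_reverse, hα, inv_inv, htv]
    rw [hcons, hhead, List.count_cons_self, cs.rightInvSeq_reverse, List.count_reverse]
    have hinj2 : Function.Injective (fun x : W => v⁻¹ * x * v) := by
      intro a b hab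
      simp only at hab
      exact mul_left_cancel (mul_right_cancel hab)
    have e2 : v⁻¹ * t * v = σ j := by
      rw [htv]
      group
    have h2 := List.count_map_of_injective (cs.leftInvSeq α) (fun x : W => v⁻¹ * x * v) hinj2 t
    rw [e2] at h2
    rw [ris_eq_map_lis, hα, h2]
    omega
  rw [c2]
  push_cast
  rw [show ((2:ZMod 2) * ((cs.leftInvSeq α).count t : ZMod 2)) = 0 by
    rw [show (2 : ZMod 2) = 0 from rfl, zero_mul]]
  ring

theorem length_lt_of_nb_eq_one {w t : W} (ht : cs.IsReflection t) (h : nb cs w t = 1) :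
    ℓ (w * t) < ℓ w := by
  obtain ⟨ω, hred, hw⟩ := cs.exists_reduced_word' w
  rw [nb_eq cs hw.symm] at h
  have hne : (cs.rightInvSeq ω).count t ≠ 0 := by
    intro h0
    rw [h0] at h
    simp at h
  have hmem : t ∈ cs.rightInvSeq ω := by
    rw [← List.count_pos_iff]
    omega
  have := cs.isRightInversion_of_mem_rightInvSeq hred hmem
  rw [hw]
  exact this.2

theorem nb_eq_one_iff {w t : W} (ht : cs.IsReflection t) :
    ℓ (w * t) < ℓ w ↔ nb cs w t = 1 := by
  constructor
  · intro hlt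
    by_contra hne
    have h0 : nb cs w t = 0 := by
      rcases (by revert hne; generalize nb cs w t = x; revert x; decide :
        nb cs w t = 0 ∨ nb cs w t = 1) with h | h
      · exact h
      · exact absurd h hne
    have h1 : nb cs (w * t) t = 1 := by
      rw [nb_mul_reflection cs w ht, h0, zero_add]
    have := length_lt_of_nb_eq_one cs ht h1
    rw [mul_assoc, ht.mul_self, mul_one] at this
    omega
  · exact length_lt_of_nb_eq_one cs ht

end Theta

theorem mem_ris_of_inversion {ω : List B} (hω : cs.IsReduced ω) {t : W}
    (ht : cs.IsReflection t) (hl : ℓ (π ω * t) < ℓ (π ω)) : t ∈ cs.rightInvSeq ω := by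
  classical
  rw [nb_eq_one_iff cs ht, nb_eq cs rfl] at hl
  have hne : (cs.rightInvSeq ω).count t ≠ 0 := by
    intro h0
    rw [h0] at hl
    simp at hl
  rw [← List.count_pos_iff]
  omega

/-- Strong exchange property. -/
theorem strong_exchange {ω : List B} (hω : cs.IsReduced ω) {t : W}
    (ht : cs.IsReflection t) (hl : ℓ (π ω * t) < ℓ (π ω)) :
    ∃ j < ω.length, π ω * t = π (ω.eraseIdx j) := by
  have hmem := mem_ris_of_inversion cs hω ht hl
  obtain ⟨j, hj, hgetj⟩ := List.mem_iff_getElem.mp hmem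
  rw [cs.length_rightInvSeq] at hj
  refine ⟨j, hj, ?_⟩
  rw [← cs.wordProd_mul_getD_rightInvSeq ω j]
  congr 1
  rw [List.getD_eq_getElem _ 1 (by rw [cs.length_rightInvSeq]; exact hj), hgetj]


/-- A single step in a Bruhat chain. -/
def chainStep (x y : W) : Prop := ∃ t, cs.IsReflection t ∧ y = x * t ∧ ℓ x < ℓ y

/-- The Bruhat chain relation. -/
def chain : W → W → Prop := Relation.ReflTransGen (chainStep cs)

theorem exists_reduced_sublist (ω : List B) :
    ∃ ω', ω' <+ ω ∧ cs.IsReduced ω' ∧ π ω' = π ω := by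
  induction ω using List.reverseRecOn with
  | nil => exact ⟨[], List.Sublist.refl _, by simp [CoxeterSystem.IsReduced], rfl⟩
  | append_singleton ω₀ b ih =>
      obtain ⟨ρ, hsub, hred, hprod⟩ := ih
      rcases cs.length_mul_simple (π ω₀) b with hup | hdown
      · refine ⟨ρ ++ [b], hsub.append (List.Sublist.refl _), ?_, ?_⟩
        · show ℓ (π (ρ ++ [b])) = (ρ ++ [b]).length
          rw [cs.wordProd_append, hprod, cs.wordProd_singleton, hup, List.length_append,
            List.length_singleton]
          have h2 : ℓ (π ω₀) = ρ.length := by rw [← hprod]; exact hred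
          omega
        · rw [cs.wordProd_append, cs.wordProd_append, hprod]
      · have hlt : ℓ (π ρ * σ b) < ℓ (π ρ) := by rw [hprod]; omega
        obtain ⟨l, hl, heq⟩ := strong_exchange cs hred (cs.isReflection_simple b) hlt
        refine ⟨ρ.eraseIdx l, ?_, ?_, ?_⟩
        · exact ((ρ.eraseIdx_sublist l).trans hsub).trans (List.sublist_append_left ω₀ [b])
        · show ℓ (π (ρ.eraseIdx l)) = _
          rw [← heq, hprod]
          have h1 : (ρ.eraseIdx l).length + 1 = ρ.length := List.length_eraseIdx_add_one hl
          have h2 : ρ.length = ℓ (π ρ) := hred.symm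
          rw [hprod] at h2
          omega
        · rw [← heq, hprod, cs.wordProd_append, cs.wordProd_singleton]

theorem step_subword {x : W} {t : W} (ht : cs.IsReflection t) (hlt : ℓ x < ℓ (x * t))
    {ω : List B} (hred : cs.IsReduced ω) (hπ : π ω = x * t) :
    ∃ τ, τ <+ ω ∧ cs.IsReduced τ ∧ π τ = x := by
  have hse : ℓ (π ω * t) < ℓ (π ω) := by
    rw [hπ, mul_assoc, ht.mul_self, mul_one]
    exact hlt
  obtain ⟨j, hj, heq⟩ := strong_exchange cs hred ht hse
  rw [hπ, mul_assoc, ht.mul_self, mul_one] at heq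
  obtain ⟨τ, hsub, hτred, hτπ⟩ := exists_reduced_sublist cs (ω.eraseIdx j)
  exact ⟨τ, hsub.trans (ω.eraseIdx_sublist j), hτred, by rw [hτπ, ← heq]⟩

theorem chain_imp_subword {u w : W} (h : chain cs u w) :
    ∀ ω : List B, cs.IsReduced ω → π ω = w →
      ∃ τ, τ <+ ω ∧ cs.IsReduced τ ∧ π τ = u := by
  induction h using Relation.ReflTransGen.head_induction_on with
  | refl => exact fun ω hred hπ => ⟨ω, List.Sublist.refl _, hred, hπ⟩
  | head hstep _ ih =>
      intro ω hred hπ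
      obtain ⟨t, ht, rfl, hlt⟩ := hstep
      obtain ⟨τc, hsubc, hredc, hπc⟩ := ih ω hred hπ
      obtain ⟨τ, hsub, hτred, hτπ⟩ := step_subword cs ht hlt hredc hπc
      exact ⟨τ, hsub.trans hsubc, hτred, hτπ⟩

theorem chain_step_simple {v : W} (j : B) (h : ℓ v < ℓ (v * σ j)) :
    chain cs v (v * σ j) :=
  Relation.ReflTransGen.single ⟨σ j, cs.isReflection_simple j, rfl, h⟩

theorem chain_step_simple_down {v : W} (j : B) (h : ℓ (v * σ j) < ℓ v) :
    chain cs (v * σ j) v := by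
  have : v = (v * σ j) * σ j := by rw [cs.simple_mul_simple_cancel_right]
  exact Relation.ReflTransGen.single ⟨σ j, cs.isReflection_simple j, this, h⟩

theorem Z9step {v w : W} (h : chainStep cs v w) (j : B) :
    chain cs (v * σ j) w ∨ chain cs (v * σ j) (w * σ j) := by
  obtain ⟨t, ht, rfl, hlt⟩ := h
  rcases cs.length_mul_simple v j with hasc | hdesc
  swap
  · -- descent of v : v*σj → v → v*t
    left
    exact Relation.ReflTransGen.tail (chain_step_simple_down cs j (by omega))
      ⟨t, ht, rfl, hlt⟩
  · -- ascent of v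
    rcases lt_trichotomy (ℓ (v * σ j)) (ℓ (v * t * σ j)) with h1 | h1 | h1
    · -- step from v*σj to v*t*σj
      right
      refine Relation.ReflTransGen.single ⟨σ j * t * σ j, ?_, ?_, h1⟩
      · have := ht.conj (σ j)
        rwa [cs.inv_simple] at this
      · simp [mul_assoc, cs.simple_mul_simple_cancel_left]
    · -- impossible by parity
      exfalso
      have hp1 : ℓ (v * t) % 2 = (ℓ v + ℓ t) % 2 := cs.length_mul_mod_two v t
      have hp2 : Odd (ℓ t) := ht.odd_length
      have hp3 : ℓ (v * t * σ j) = ℓ (v * t) + 1 ∨ ℓ (v * t * σ j) + 1 = ℓ (v * t) :=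
        cs.length_mul_simple (v * t) j
      obtain ⟨c, hc⟩ := hp2
      omega
    · -- the forced-equality case
      have hwdesc : ℓ (v * t * σ j) + 1 = ℓ (v * t) := by
        rcases cs.length_mul_simple (v * t) j with h2 | h2 <;> omega
      obtain ⟨ρ, hρred, hρπ⟩ := cs.exists_reduced_word' (v * t * σ j)
      have hρlen : ρ.length = ℓ (v * t * σ j) := by rw [hρπ]; exact hρred.symm
      have hωred : cs.IsReduced (ρ ++ [j]) := by
        show ℓ (π (ρ ++ [j])) = _
        rw [cs.wordProd_append, cs.wordProd_singleton, ← hρπ,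
          cs.simple_mul_simple_cancel_right, List.length_append, List.length_singleton]
        omega
      have hωπ : π (ρ ++ [j]) = v * t := by
        rw [cs.wordProd_append, cs.wordProd_singleton, ← hρπ,
          cs.simple_mul_simple_cancel_right]
      have hse : ℓ (π (ρ ++ [j]) * t) < ℓ (π (ρ ++ [j])) := by
        rw [hωπ, mul_assoc, ht.mul_self, mul_one]
        exact hlt
      obtain ⟨l, hl, heq⟩ := strong_exchange cs hωred ht hse
      rw [hωπ, mul_assoc, ht.mul_self, mul_one] at heq
      -- heq : v = π ((ρ ++ [j]).eraseIdx l)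
      rw [List.length_append, List.length_singleton] at hl
      rcases Nat.lt_succ_iff_lt_or_eq.mp hl with hl' | hl'
      · -- l < ρ.length : contradiction
        exfalso
        rw [List.eraseIdx_append_of_lt_length hl' [j]] at heq
        have : v * σ j = π (ρ.eraseIdx l) := by
          rw [heq, cs.wordProd_append, cs.wordProd_singleton, cs.simple_mul_simple_cancel_right]
        have hlen1 : ℓ (v * σ j) ≤ (ρ.eraseIdx l).length := by
          rw [this]
          exact cs.length_wordProd_le _
        have hlen2 : (ρ.eraseIdx l).length + 1 = ρ.length := List.length_eraseIdx_add_one hl'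
        omega
      · -- l = ρ.length : v = π ρ, so v * σ j = v * t
        left
        have herase : (ρ ++ [j]).eraseIdx l = ρ := by
          rw [List.eraseIdx_eq_take_drop_succ]
          rw [hl']
          simp
        rw [herase] at heq
        have h3 : v = v * t * σ j := heq.trans hρπ.symm
        have h4 : v * σ j = v * t := by
          conv_lhs => rw [h3]
          rw [cs.simple_mul_simple_cancel_right]
        rw [h4]
        exact Relation.ReflTransGen.refl

theorem Z9 {u w : W} (h : chain cs u w) (j : B) :
    chain cs (u * σ j) w ∨ chain cs (u * σ j) (w * σ j) := by
  induction h with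
  | refl => right; exact Relation.ReflTransGen.refl
  | tail hcv hstep ih =>
      rename_i v w'
      rcases ih with ih | ih
      · left; exact Relation.ReflTransGen.tail ih hstep
      · rcases Z9step cs hstep j with h' | h'
        · left; exact Relation.ReflTransGen.trans ih h'
        · right; exact Relation.ReflTransGen.trans ih h'

theorem subword_imp_chain {ω : List B} (hred : cs.IsReduced ω) :
    ∀ τ : List B, τ <+ ω → chain cs (π τ) (π ω) := by
  induction ω using List.reverseRecOn with
  | nil =>
      intro τ hτ
      rw [List.sublist_nil.mp hτ]
      exact Relation.ReflTransGen.refl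
  | append_singleton ω₀ b ih =>
      intro τ hτ
      have hred₀ : cs.IsReduced ω₀ := by
        have := hred.take ω₀.length
        rwa [List.take_left] at this
      have hstep : chainStep cs (π ω₀) (π (ω₀ ++ [b])) := by
        refine ⟨σ b, cs.isReflection_simple b, by rw [cs.wordProd_append]; simp, ?_⟩
        rw [hred₀, hred]
        simp
      rcases sublist_concat_cases' hτ with h' | ⟨τ₀, rfl, h'⟩
      · exact Relation.ReflTransGen.tail (ih hred₀ τ h') hstep
      · have hchain₀ := ih hred₀ τ₀ h'
        have hπτ : π (τ₀ ++ [b]) = π τ₀ * σ b := by rw [cs.wordProd_append]; simp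
        have hπω : π (ω₀ ++ [b]) = π ω₀ * σ b := by rw [cs.wordProd_append]; simp
        rw [hπτ, hπω]
        rcases Z9 cs hchain₀ b with h'' | h''
        · refine Relation.ReflTransGen.trans h'' (Relation.ReflTransGen.single ?_)
          refine ⟨σ b, cs.isReflection_simple b, rfl, ?_⟩
          rw [← hπω, hred, hred₀]
          simp
        · exact h''


theorem bruhatLE_iff_chain {u w : W} : bruhatLE cs u w ↔ chain cs u w := by
  constructor
  · rintro ⟨lv, lu, redv, hv, _, hu, hsub⟩
    have := subword_imp_chain cs redv lu hsub
    rwa [hu, hv] at this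
  · intro h
    obtain ⟨ω, hred, hπ⟩ := cs.exists_reduced_word' w
    obtain ⟨τ, hsub, hτred, hτπ⟩ := chain_imp_subword cs h ω hred hπ.symm
    exact ⟨ω, τ, hred, hπ.symm, hτred, hτπ, hsub⟩

theorem bruhatLE_refl (u : W) : bruhatLE cs u u :=
  (bruhatLE_iff_chain cs).mpr Relation.ReflTransGen.refl

theorem bruhatLE_trans {u v w : W} (h1 : bruhatLE cs u v) (h2 : bruhatLE cs v w) :
    bruhatLE cs u w :=
  (bruhatLE_iff_chain cs).mpr
    (Relation.ReflTransGen.trans ((bruhatLE_iff_chain cs).mp h1) ((bruhatLE_iff_chain cs).mp h2))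

theorem subword_of_le {u w : W} (h : bruhatLE cs u w) {ω : List B}
    (hred : cs.IsReduced ω) (hπ : π ω = w) :
    ∃ τ, τ <+ ω ∧ cs.IsReduced τ ∧ π τ = u :=
  chain_imp_subword cs ((bruhatLE_iff_chain cs).mp h) ω hred hπ

theorem length_le_of_le {u w : W} (h : bruhatLE cs u w) : ℓ u ≤ ℓ w := by
  obtain ⟨lv, lu, redv, hv, redu, hu, hsub⟩ := h
  have h1 : ℓ u = lu.length := by rw [← hu]; exact redu
  have h2 : ℓ w = lv.length := by rw [← hv]; exact redv
  rw [h1, h2]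
  exact hsub.length_le

theorem eq_of_le_of_length_le {u w : W} (h : bruhatLE cs u w) (hl : ℓ w ≤ ℓ u) : u = w := by
  obtain ⟨lv, lu, redv, hv, redu, hu, hsub⟩ := h
  have h1 : ℓ u = lu.length := by rw [← hu]; exact redu
  have h2 : ℓ w = lv.length := by rw [← hv]; exact redv
  have : lu = lv := hsub.eq_of_length_le (by omega)
  rw [← hu, ← hv, this]

theorem le_mul_simple_of_lt {w : W} (j : B) (h : ℓ w < ℓ (w * σ j)) :
    bruhatLE cs w (w * σ j) :=
  (bruhatLE_iff_chain cs).mpr (chain_step_simple cs j h)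

theorem mul_simple_le_of_lt {w : W} (j : B) (h : ℓ (w * σ j) < ℓ w) :
    bruhatLE cs (w * σ j) w :=
  (bruhatLE_iff_chain cs).mpr (chain_step_simple_down cs j h)

theorem Z9le {u w : W} (h : bruhatLE cs u w) (j : B) :
    bruhatLE cs (u * σ j) w ∨ bruhatLE cs (u * σ j) (w * σ j) := by
  rcases Z9 cs ((bruhatLE_iff_chain cs).mp h) j with h' | h'
  · exact Or.inl ((bruhatLE_iff_chain cs).mpr h')
  · exact Or.inr ((bruhatLE_iff_chain cs).mpr h')

/-- Monotonicity of right multiplication by `s` when the top ascends. -/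
theorem le_mono_mul {u w : W} (h : bruhatLE cs u w) (j : B) (hw : ℓ w < ℓ (w * σ j)) :
    bruhatLE cs (u * σ j) (w * σ j) := by
  rcases Z9le cs h j with h' | h'
  · exact bruhatLE_trans cs h' (le_mul_simple_of_lt cs j hw)
  · exact h'

section Lifting

variable {u w : W} {j : B}

/-- Lifting property, part 1: if `s` is a descent of `w` and `u ≤ w` then `us ≤ w`. -/
theorem lift_one (hws : ℓ (w * σ j) < ℓ w) (h : bruhatLE cs u w) :
    bruhatLE cs (u * σ j) w := by
  rcases Z9le cs h j with h' | h'
  · exact h'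
  · exact bruhatLE_trans cs h' (mul_simple_le_of_lt cs j hws)

/-- Helper: decomposition of `u ≤ w` along a reduced word of `w` ending in `j`. -/
theorem le_decomp (hws : ℓ (w * σ j) < ℓ w) (h : bruhatLE cs u w) :
    bruhatLE cs u (w * σ j) ∨
      (bruhatLE cs (u * σ j) (w * σ j) ∧ ℓ (u * σ j) + 1 = ℓ u) := by
  obtain ⟨ρ, hρred, hρπ⟩ := cs.exists_reduced_word' (w * σ j)
  have hρlen : ρ.length = ℓ (w * σ j) := by rw [hρπ]; exact hρred.symm
  have hωπ : π (ρ ++ [j]) = w := by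
    rw [cs.wordProd_append, cs.wordProd_singleton, ← hρπ, cs.simple_mul_simple_cancel_right]
  have hωred : cs.IsReduced (ρ ++ [j]) := by
    show ℓ (π (ρ ++ [j])) = (ρ ++ [j]).length
    rw [hωπ, List.length_append, List.length_singleton]
    rcases cs.length_mul_simple w j with h' | h' <;> omega
  obtain ⟨τ, hsub, hτred, hτπ⟩ := subword_of_le cs h hωred hωπ
  rcases sublist_concat_cases' hsub with h' | ⟨τ₀, rfl, h'⟩
  · left
    exact ⟨ρ, τ, hρred, hρπ.symm, hτred, hτπ, h'⟩
  · right
    have hτ₀red : cs.IsReduced τ₀ := by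
      have := hτred.take τ₀.length
      rwa [List.take_left] at this
    have hτ₀π : π τ₀ = u * σ j := by
      have : π (τ₀ ++ [j]) = π τ₀ * σ j := by rw [cs.wordProd_append]; simp
      rw [this] at hτπ
      rw [← hτπ, cs.simple_mul_simple_cancel_right]
    constructor
    · exact ⟨ρ, τ₀, hρred, hρπ.symm, hτ₀red, hτ₀π, h'⟩
    · have l1 : ℓ (u * σ j) = τ₀.length := by rw [← hτ₀π]; exact hτ₀red
      have l2 : ℓ u = τ₀.length + 1 := by
        rw [← hτπ]
        rw [hτred]
        simp
      omega

/-- Lifting property, part 2. -/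
theorem lift_two (hws : ℓ (w * σ j) < ℓ w) (hus : ℓ (u * σ j) < ℓ u) (h : bruhatLE cs u w) :
    bruhatLE cs (u * σ j) (w * σ j) := by
  rcases le_decomp cs hws h with h' | ⟨h', _⟩
  · exact bruhatLE_trans cs (mul_simple_le_of_lt cs j hus) h'
  · exact h'

/-- Lifting property, part 3. -/
theorem lift_three (hws : ℓ (w * σ j) < ℓ w) (hus : ℓ u < ℓ (u * σ j)) (h : bruhatLE cs u w) :
    bruhatLE cs u (w * σ j) := by
  rcases le_decomp cs hws h with h' | ⟨_, h2⟩
  · exact h'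
  · omega

end Lifting

end BruhatAux

open BruhatAux

/-- if `u < us`, `w < ws`, `u ≤ w` and `us ≰ w`, then the Bruhat interval
`[u,ws]` is order-isomorphic to the product of `[u,w]` with the two-element chain
`[1,s]` (encoded as `Bool` with `false < true`), via `(v,1) ↦ v`, `(v,s) ↦ vs`. -/
theorem bruhat_interval_iso_product {B W : Type*} [Group W] {M : CoxeterMatrix B}
    (cs : CoxeterSystem M W) (u w : W) (s : B)
    (huw : bruhatLE cs u w)
    (hu : bruhatLT cs u (u * cs.simple s))
    (hw : bruhatLT cs w (w * cs.simple s))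
    (hus : ¬ bruhatLE cs (u * cs.simple s) w) :
    ∃ f : {v : W // bruhatLE cs u v ∧ bruhatLE cs v w} × Bool ≃
          {v : W // bruhatLE cs u v ∧ bruhatLE cs v (w * cs.simple s)},
      (∀ p, (f p).val = if p.2 then p.1.val * cs.simple s else p.1.val) ∧
      (∀ p q, (bruhatLE cs p.1.val q.1.val ∧ p.2 ≤ q.2) ↔
        bruhatLE cs (f p).val (f q).val) := by
  classical
  have hlu : cs.length u < cs.length (u * cs.simple s) := by
    have h1 := length_le_of_le cs hu.1
    rcases cs.length_mul_simple u s with h | h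
    · omega
    · exact absurd (eq_of_le_of_length_le cs hu.1 (by omega)) hu.2
  have hlw : cs.length w < cs.length (w * cs.simple s) := by
    have h1 := length_le_of_le cs hw.1
    rcases cs.length_mul_simple w s with h | h
    · omega
    · exact absurd (eq_of_le_of_length_le cs hw.1 (by omega)) hw.2
  have hcancel : ∀ v : W, v * cs.simple s * cs.simple s = v :=
    fun v => cs.simple_mul_simple_cancel_right s
  have hwss : cs.length (w * cs.simple s * cs.simple s) < cs.length (w * cs.simple s) := by
    rw [hcancel]; exact hlw
  have hB : ∀ v : W, bruhatLE cs u v → bruhatLE cs v w →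
      cs.length v < cs.length (v * cs.simple s) := by
    intro v h1 h2
    rcases cs.length_mul_simple v s with h | h
    · omega
    · exact absurd (bruhatLE_trans cs (lift_one cs (by omega) h1) h2) hus
  have hw_le_ws : bruhatLE cs w (w * cs.simple s) := le_mul_simple_of_lt cs s hlw
  -- the forward map
  set T1 := {v : W // bruhatLE cs u v ∧ bruhatLE cs v w} with hT1
  set T2 := {v : W // bruhatLE cs u v ∧ bruhatLE cs v (w * cs.simple s)} with hT2
  have memF : ∀ (v : T1), bruhatLE cs u (v.val * cs.simple s) ∧
      bruhatLE cs (v.val * cs.simple s) (w * cs.simple s) := by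
    intro v
    constructor
    · exact bruhatLE_trans cs v.2.1
        (le_mul_simple_of_lt cs s (hB v.val v.2.1 v.2.2))
    · exact le_mono_mul cs v.2.2 s hlw
  have m1 : ∀ v : T1, bruhatLE cs u v.val ∧ bruhatLE cs v.val (w * cs.simple s) :=
    fun v => ⟨v.2.1, bruhatLE_trans cs v.2.2 hw_le_ws⟩
  have g1 : ∀ x : T2, cs.length (x.val * cs.simple s) < cs.length x.val →
      bruhatLE cs u (x.val * cs.simple s) ∧ bruhatLE cs (x.val * cs.simple s) w := by
    intro x h
    refine ⟨lift_three cs h hlu x.2.1, ?_⟩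
    have := lift_two cs hwss h x.2.2
    rwa [hcancel] at this
  have g2 : ∀ x : T2, ¬ cs.length (x.val * cs.simple s) < cs.length x.val →
      bruhatLE cs u x.val ∧ bruhatLE cs x.val w := by
    intro x h
    refine ⟨x.2.1, ?_⟩
    have hxasc : cs.length x.val < cs.length (x.val * cs.simple s) := by
      rcases cs.length_mul_simple x.val s with h' | h' <;> omega
    have := lift_three cs hwss hxasc x.2.2
    rwa [hcancel] at this
  let F : T1 × Bool → T2 := fun p =>
    cond p.2 ⟨p.1.val * cs.simple s, memF p.1⟩ ⟨p.1.val, m1 p.1⟩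
  let G : T2 → T1 × Bool := fun x =>
    if h : cs.length (x.val * cs.simple s) < cs.length x.val then
      (⟨x.val * cs.simple s, g1 x h⟩, true)
    else (⟨x.val, g2 x h⟩, false)
  have hGF : Function.LeftInverse G F := by
    rintro ⟨v, b⟩
    have hv := hB v.val v.2.1 v.2.2
    cases b
    · show G ⟨v.val, m1 v⟩ = (v, false)
      dsimp only [G]
      rw [dif_neg (by omega)]
    · show G ⟨v.val * cs.simple s, memF v⟩ = (v, true)
      dsimp only [G]
      rw [dif_pos (by rw [hcancel]; exact hv)]
      exact Prod.ext (Subtype.ext (hcancel v.val)) rfl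
  have hFG : Function.RightInverse G F := by
    rintro ⟨x, hx⟩
    by_cases h : cs.length (x * cs.simple s) < cs.length x
    · have hGx : G ⟨x, hx⟩ = (⟨x * cs.simple s, g1 ⟨x, hx⟩ h⟩, true) := by
        dsimp only [G]
        rw [dif_pos h]
      rw [hGx]
      show (⟨x * cs.simple s * cs.simple s, _⟩ : T2) = ⟨x, hx⟩
      exact Subtype.ext (hcancel x)
    · have hGx : G ⟨x, hx⟩ = (⟨x, g2 ⟨x, hx⟩ h⟩, false) := by
        dsimp only [G]
        rw [dif_neg h]
      rw [hGx]
      exact Subtype.ext rfl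
  refine ⟨⟨F, G, hGF, hFG⟩, ?_, ?_⟩
  · rintro ⟨v, b⟩
    cases b <;> rfl
  · rintro ⟨v, b⟩ ⟨v', b'⟩
    have hv := hB v.val v.2.1 v.2.2
    have hv' := hB v'.val v'.2.1 v'.2.2
    have hv'ss : cs.length (v'.val * cs.simple s * cs.simple s) <
        cs.length (v'.val * cs.simple s) := by rw [hcancel]; exact hv'
    cases b <;> cases b'
    · -- false, false
      show (bruhatLE cs v.val v'.val ∧ (false : Bool) ≤ false) ↔
        bruhatLE cs v.val v'.val
      simp
    · -- false, true
      show (bruhatLE cs v.val v'.val ∧ (false : Bool) ≤ true) ↔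
        bruhatLE cs v.val (v'.val * cs.simple s)
      constructor
      · intro h
        exact bruhatLE_trans cs h.1 (le_mul_simple_of_lt cs s hv')
      · intro h
        refine ⟨?_, by simp⟩
        have := lift_three cs hv'ss hv h
        rwa [hcancel] at this
    · -- true, false
      show (bruhatLE cs v.val v'.val ∧ (true : Bool) ≤ false) ↔
        bruhatLE cs (v.val * cs.simple s) v'.val
      constructor
      · rintro ⟨-, hbb⟩
        exact absurd hbb (by simp)
      · intro h
        exfalso
        apply hus
        have h1 : bruhatLE cs (u * cs.simple s) (v.val * cs.simple s) :=
          le_mono_mul cs v.2.1 s hv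
        exact bruhatLE_trans cs (bruhatLE_trans cs h1 h) v'.2.2
    · -- true, true
      show (bruhatLE cs v.val v'.val ∧ (true : Bool) ≤ true) ↔
        bruhatLE cs (v.val * cs.simple s) (v'.val * cs.simple s)
      constructor
      · intro h
        exact le_mono_mul cs h.1 s hv'
      · intro h
        refine ⟨?_, le_refl _⟩
        have h1 : bruhatLE cs v.val (v'.val * cs.simple s) :=
          bruhatLE_trans cs (le_mul_simple_of_lt cs s hv) h
        have := lift_three cs hv'ss hv h1
        rwa [hcancel] at this
end

section
/- Let (W,S) be a universal Coxeter system (all m(s,t) = ∞ for s ≠ t) with S = {s₁,…,s_{d+1}}, and let C_k denote the word s₁s₂⋯s_k with subscripts taken modulo d+1. Then every element of the open Bruhat interval (C_k, C_{d+k}) is lengthened on the right by s_{d+k+1}; that is, no v with C_k < v < C_{d+k} satisfies v·s_{d+k+1} < v. -/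
/-- The word `C_k = s₁s₂⋯s_k` with subscripts taken modulo `d+1`
(indices in `Fin (d+1)`, zero-based: the `j`-th letter, `1 ≤ j ≤ k`, is `s_j`,
i.e. the generator with index `(j-1) mod (d+1)`). -/
def cyclicWord (d k : ℕ) : List (Fin (d + 1)) :=
  (List.range k).map (fun j => ⟨j % (d + 1), Nat.mod_lt _ (Nat.succ_pos d)⟩)

/-! ### Auxiliary machinery: uniqueness of reduced words in universal Coxeter groups -/

/-- The free product of copies of `ℤ/2`, the target of the lift of a universal
Coxeter system. -/
abbrev UnivTarget (n : ℕ) := Monoid.CoprodI (fun _ : Fin n => Multiplicative (ZMod 2))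

/-- The `i`-th canonical generator of `UnivTarget n`. -/
def ugen {n : ℕ} (i : Fin n) : UnivTarget n :=
  Monoid.CoprodI.of (i := i) (Multiplicative.ofAdd (1 : ZMod 2))

/-- Turn a list with no equal adjacent letters into a reduced `Word`. -/
def mkWord {n : ℕ} (l : List (Fin n)) (h : l.Chain' (· ≠ ·)) :
    Monoid.CoprodI.Word (fun _ : Fin n => Multiplicative (ZMod 2)) where
  toList := l.map fun i => ⟨i, Multiplicative.ofAdd (1 : ZMod 2)⟩
  ne_one := by
    intro p hp
    simp only [List.mem_map] at hp
    obtain ⟨i, _, rfl⟩ := hp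
    show Multiplicative.ofAdd (1 : ZMod 2) ≠ 1
    decide
  chain_ne := by
    rw [List.isChain_map]
    exact h

lemma mkWord_prod {n : ℕ} (l : List (Fin n)) (h : l.Chain' (· ≠ ·)) :
    (mkWord l h).prod = (l.map ugen).prod := by
  simp only [mkWord, Monoid.CoprodI.Word.prod, List.map_map]
  rfl

lemma word_prod_injective {n : ℕ} :
    Function.Injective
      (Monoid.CoprodI.Word.prod (M := fun _ : Fin n => Multiplicative (ZMod 2))) :=
  (Monoid.CoprodI.Word.equiv).symm.injective

lemma chain'_eq_of_prod_eq {n : ℕ} {l1 l2 : List (Fin n)}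
    (h1 : l1.Chain' (· ≠ ·)) (h2 : l2.Chain' (· ≠ ·))
    (h : (l1.map ugen).prod = (l2.map ugen).prod) : l1 = l2 := by
  have heq : mkWord l1 h1 = mkWord l2 h2 := by
    apply word_prod_injective
    rw [mkWord_prod, mkWord_prod, h]
  have ht : l1.map (fun i => (⟨i, Multiplicative.ofAdd (1 : ZMod 2)⟩ : Σ _ : Fin n, _))
      = l2.map _ := congrArg Monoid.CoprodI.Word.toList heq
  exact List.map_injective_iff.mpr (fun a b hab => congrArg Sigma.fst hab) ht

section Cox

variable {W : Type*} [Group W] {n : ℕ} {M : CoxeterMatrix (Fin n)}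
  (cs : CoxeterSystem M W)

lemma ugen_liftable (huniv : ∀ i j : Fin n, i ≠ j → M i j = 0) :
    M.IsLiftable (ugen (n := n)) := by
  intro i j
  rcases eq_or_ne i j with rfl | hij
  · rw [M.diagonal i, pow_one, ugen, ← map_mul]
    have h1 : (Multiplicative.ofAdd (1 : ZMod 2)) * (Multiplicative.ofAdd (1 : ZMod 2)) = 1 := by
      decide
    rw [h1, map_one]
  · rw [huniv i j hij, pow_zero]

lemma lift_wordProd (huniv : ∀ i j : Fin n, i ≠ j → M i j = 0) (l : List (Fin n)) :
    cs.lift ⟨ugen, ugen_liftable huniv⟩ (cs.wordProd l) = (l.map ugen).prod := by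
  rw [CoxeterSystem.wordProd, map_list_prod, List.map_map]
  congr 1
  apply List.map_congr_left
  intro i _
  exact cs.lift_apply_simple (ugen_liftable huniv) i

/-- Key lemma: two words with no equal adjacent letters and the same product coincide. -/
lemma chain'_unique (huniv : ∀ i j : Fin n, i ≠ j → M i j = 0)
    {l1 l2 : List (Fin n)} (h1 : l1.Chain' (· ≠ ·)) (h2 : l2.Chain' (· ≠ ·))
    (h : cs.wordProd l1 = cs.wordProd l2) : l1 = l2 := by
  apply chain'_eq_of_prod_eq h1 h2
  rw [← lift_wordProd cs huniv, ← lift_wordProd cs huniv, h]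

lemma length_lt_of_not_chain' {l : List (Fin n)} (h : ¬ l.Chain' (· ≠ ·)) :
    cs.length (cs.wordProd l) < l.length := by
  induction l with
  | nil => exact absurd List.isChain_nil h
  | cons x t ih =>
    match t with
    | [] => exact absurd (List.isChain_singleton x) h
    | y :: t' =>
      unfold List.Chain' at h
      rw [List.isChain_cons_cons, not_and_or] at h
      rcases h with h | h
      · push_neg at h
        subst h
        rw [cs.wordProd_cons, cs.wordProd_cons, CoxeterSystem.simple_mul_simple_cancel_left]
        have := cs.length_wordProd_le t'
        simp only [List.length_cons]
        omega
      · have hlt := ih h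
        rw [cs.wordProd_cons]
        have h1 := cs.length_mul_le (cs.simple x) (cs.wordProd (y :: t'))
        rw [cs.length_simple] at h1
        simp only [List.length_cons] at *
        omega

lemma chain'_of_isReduced {l : List (Fin n)} (h : cs.IsReduced l) : l.Chain' (· ≠ ·) := by
  by_contra hc
  have := length_lt_of_not_chain' cs hc
  rw [h] at this
  omega

/-- In a Bruhat-comparable pair, lengths are comparable. -/
lemma bruhatLE_length {u v : W} (h : bruhatLE cs u v) : cs.length u ≤ cs.length v := by
  obtain ⟨lv, lu, hrv, hpv, hru, hpu, hsub⟩ := h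
  have h1 : cs.length u = lu.length := by rw [← hpu]; exact hru
  have h2 : cs.length v = lv.length := by rw [← hpv]; exact hrv
  rw [h1, h2]
  exact hsub.length_le

/-- Asymmetry of the strict Bruhat order. -/
lemma bruhatLT_asymm {u v : W} (h1 : bruhatLT cs u v) (h2 : bruhatLT cs v u) : False := by
  have hle1 := bruhatLE_length cs h1.1
  have hle2 := bruhatLE_length cs h2.1
  obtain ⟨⟨lv, lu, hrv, hpv, hru, hpu, hsub⟩, hne⟩ := h1
  have hlen : lu.length = lv.length := by
    have h1' : cs.length u = lu.length := by rw [← hpu]; exact hru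
    have h2' : cs.length v = lv.length := by rw [← hpv]; exact hrv
    omega
  have : lu = lv := hsub.eq_of_length hlen
  exact hne (by rw [← hpu, this, hpv])

end Cox

lemma chain'_cyclicWord {d : ℕ} (hd : 0 < d) (n : ℕ) :
    (cyclicWord d n).Chain' (· ≠ ·) := by
  unfold cyclicWord List.Chain'
  rw [List.isChain_map]
  cases n with
  | zero => simp
  | succ n =>
    rw [List.isChain_range_succ]
    intro m _ hEq
    have h1 : m % (d + 1) = (m + 1) % (d + 1) := congrArg Fin.val hEq
    have h2 : (d + 1) ∣ (m + 1 - m) := (Nat.modEq_iff_dvd' (Nat.le_succ m)).mp h1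
    have := Nat.le_of_dvd (by omega) h2
    omega

@[simp] lemma length_cyclicWord (d n : ℕ) : (cyclicWord d n).length = n := by
  simp [cyclicWord]

/-- An order embedding of `Fin`s does not decrease indices. -/
lemma fin_orderEmb_le {a b : ℕ} (f : Fin a ↪o Fin b) (i : Fin a) : (i : ℕ) ≤ (f i : ℕ) := by
  have key : ∀ t : ℕ, ∀ i : Fin a, (i : ℕ) = t → t ≤ (f i : ℕ) := by
    intro t
    induction t with
    | zero => intro i _; omega
    | succ t ih =>
      intro i hi
      have hlt : t < a := by omega
      have h1 := ih ⟨t, hlt⟩ rfl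
      have h2 : f ⟨t, hlt⟩ < f i := f.strictMono (by rw [Fin.lt_def]; simp; omega)
      rw [Fin.lt_def] at h2
      omega
  exact key _ i rfl

/-- in a universal Coxeter system with generators `s₁,…,s_{d+1}`,
every element `v` of the open Bruhat interval `(C_k, C_{d+k})` is lengthened on
the right by `s_{d+k+1}`. -/
theorem universal_cyclic_word_lengthened {W : Type*} [Group W]
    {M : CoxeterMatrix (Fin (d + 1))} (cs : CoxeterSystem M W)
    (huniv : ∀ i j : Fin (d + 1), i ≠ j → M i j = 0)
    (k : ℕ) :
    ∀ v : W, bruhatLT cs (cs.wordProd (cyclicWord d k)) v →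
      bruhatLT cs v (cs.wordProd (cyclicWord d (d + k))) →
      cs.length v <
        cs.length (v * cs.simple ⟨(d + k) % (d + 1), Nat.mod_lt _ (Nat.succ_pos d)⟩) := by
  intro v h1 h2
  by_contra hnot
  push_neg at hnot
  rcases Nat.eq_zero_or_pos d with hd | hd
  · -- d = 0 : the interval (C_k, C_k) is empty
    subst hd
    simp only [Nat.zero_add] at h2
    exact bruhatLT_asymm cs h1 h2
  -- d ≥ 1
  set i₀ : Fin (d + 1) := ⟨(d + k) % (d + 1), Nat.mod_lt _ (Nat.succ_pos d)⟩ with hi₀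
  have chainC := chain'_cyclicWord hd (d + k)
  have chainc := chain'_cyclicWord hd k
  -- unpack v < C_{d+k}
  obtain ⟨lC, lu, hrC, hpC, hru, hpu, hsub⟩ := h2.1
  have hlC : lC = cyclicWord d (d + k) :=
    chain'_unique cs huniv (chain'_of_isReduced cs hrC) chainC (by rw [hpC])
  rw [hlC] at hsub
  -- unpack C_k < v
  obtain ⟨lv', lc', hrv', hpv', hrc', hpc', hsub'⟩ := h1.1
  have hlv' : lv' = lu :=
    chain'_unique cs huniv (chain'_of_isReduced cs hrv') (chain'_of_isReduced cs hru)
      (by rw [hpv', hpu])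
  have hlc' : lc' = cyclicWord d k :=
    chain'_unique cs huniv (chain'_of_isReduced cs hrc') chainc (by rw [hpc'])
  rw [hlv', hlc'] at hsub'
  -- v has a right descent at i₀, hence its reduced word ends in i₀
  have hdesc : cs.length (v * cs.simple i₀) + 1 = cs.length v := by
    rcases cs.length_mul_simple v i₀ with h | h
    · omega
    · exact h
  obtain ⟨m, hm, hmp⟩ := cs.exists_reduced_word' (v * cs.simple i₀)
  have hprod : cs.wordProd (m ++ [i₀]) = v := by
    rw [cs.wordProd_append, cs.wordProd_singleton, ← hmp,
      CoxeterSystem.simple_mul_simple_cancel_right]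
  have hred : cs.IsReduced (m ++ [i₀]) := by
    have hmlen : cs.length (v * cs.simple i₀) = m.length := by rw [hmp]; exact hm
    show cs.length (cs.wordProd (m ++ [i₀])) = (m ++ [i₀]).length
    rw [hprod]
    simp only [List.length_append, List.length_singleton]
    omega
  have hlast : lu = m ++ [i₀] :=
    chain'_unique cs huniv (chain'_of_isReduced cs hru) (chain'_of_isReduced cs hred)
      (by rw [hpu, hprod])
  subst hlast
  -- length bounds
  have hklt : k < m.length + 1 := by
    have hle : k ≤ (m ++ [i₀]).length := by
      have := hsub'.length_le
      simpa using this
    simp only [List.length_append, List.length_singleton] at hle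
    rcases Nat.lt_or_ge k (m.length + 1) with h | h
    · exact h
    · exfalso
      have heq : cyclicWord d k = m ++ [i₀] := by
        apply hsub'.eq_of_length
        simp only [length_cyclicWord, List.length_append, List.length_singleton]
        omega
      exact h1.2 (by rw [← hpc', hlc', heq, hpu])
  -- the last letter of lu sits at position j in C_{d+k}
  obtain ⟨femb, hf⟩ := List.sublist_iff_exists_fin_orderEmbedding_get_eq.mp hsub
  have hixlt : m.length < (m ++ [i₀]).length := by simp
  set ix : Fin (m ++ [i₀]).length := ⟨m.length, hixlt⟩ with hix
  have hgetlu : (m ++ [i₀]).get ix = i₀ := by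
    simp only [List.get_eq_getElem, hix]
    exact List.getElem_concat_length (l := m) (a := i₀) (i := m.length) rfl (by simp)
  have key := hf ix
  rw [hgetlu] at key
  set jf := femb ix with hjf
  have hj1 : m.length ≤ (jf : ℕ) := fin_orderEmb_le femb ix
  have hj2 : (jf : ℕ) < d + k := by
    have := jf.isLt
    simpa using this
  have hgetC : (cyclicWord d (d + k)).get jf =
      (⟨(jf : ℕ) % (d + 1), Nat.mod_lt _ (Nat.succ_pos d)⟩ : Fin (d + 1)) := by
    rw [List.get_eq_getElem]
    simp [cyclicWord]
  rw [hgetC] at key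
  have hmod : (d + k) % (d + 1) = (jf : ℕ) % (d + 1) := by
    have := congrArg Fin.val key
    simpa [hi₀] using this
  -- arithmetic contradiction
  have hdvd : (d + 1) ∣ (d + k - (jf : ℕ)) :=
    (Nat.modEq_iff_dvd' (le_of_lt hj2)).mp hmod.symm
  have := Nat.le_of_dvd (by omega) hdvd
  omega
end
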